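/- For all n ≥ r ≥ k ≥ 1, every n-vertex graph with no copy of K_{r+1} contains at most as many copies of K_k as the Turán graph T(n,r); i.e., ex(n, K_k, K_{r+1}) = N(K_k, T(n,r)). -/

import Mathlib

open SimpleGraph Finset

private instance myFinsetFinite {W : Type*} [Finite W] : Finite (Finset W) := by
  have := Fintype.ofFinite W
  classical
  infer_instance

private noncomputable def cnt {V : Type*} (G : SimpleGraph V) (k : ℕ) : ℕ :=
  {s : Finset V | G.IsNClique k s}.ncard


open SimpleGraph Finset

private lemma cnt_le_of_hom {V W : Type*} [Finite W] (G : SimpleGraph V) (H : SimpleGraph W)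
    (f : V ↪ W) (hf : ∀ a b, G.Adj a b → H.Adj (f a) (f b)) (k : ℕ) :
    cnt G k ≤ cnt H k := by

  apply Set.ncard_le_ncard_of_injOn (fun s => s.map f) ?_ ?_ (Set.toFinite _)
  · rintro s hs
    refine ⟨?_, by simp [hs.card_eq]⟩
    intro x hx y hy hxy
    simp only [Finset.coe_map, Set.mem_image, Finset.mem_coe] at hx hy
    obtain ⟨a, ha, rfl⟩ := hx
    obtain ⟨b, hb, rfl⟩ := hy
    exact hf a b (hs.isClique ha hb (fun h => hxy (by rw [h])))
  · exact fun s _ t _ h => Finset.map_injective f h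

private lemma cnt_one {V : Type*} [Finite V] (G : SimpleGraph V) :
    cnt G 1 = Nat.card V := by
  have h : {s : Finset V | G.IsNClique 1 s} = (fun a : V => ({a} : Finset V)) '' Set.univ := by
    ext s
    simp only [Set.mem_setOf_eq, Set.image_univ, Set.mem_range]
    constructor
    · intro hs
      obtain ⟨a, rfl⟩ := Finset.card_eq_one.mp hs.card_eq
      exact ⟨a, rfl⟩
    · rintro ⟨a, rfl⟩
      exact ⟨by simp [SimpleGraph.isClique_iff, Set.pairwise_singleton], by simp⟩
  rw [cnt, h, Set.ncard_image_of_injective _ (fun a b hab => by simpa using hab),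
    Set.ncard_univ]


private lemma cnt_split {V : Type*} [Finite V] (G : SimpleGraph V) (v : V) (k : ℕ) (hk : 1 ≤ k) :
    cnt G k ≤ cnt (G.induce {x | x ≠ v}) k + cnt (G.induce (G.neighborSet v)) (k - 1) := by
  classical
  have hfin : Finite (Finset V) := by
    have := Fintype.ofFinite V; infer_instance
  have hsub : {s : Finset V | G.IsNClique k s} ⊆
      {s : Finset V | G.IsNClique k s ∧ v ∉ s} ∪ {s : Finset V | G.IsNClique k s ∧ v ∈ s} := by
    intro s hs
    by_cases h : v ∈ s
    · exact Or.inr ⟨hs, h⟩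
    · exact Or.inl ⟨hs, h⟩
  calc cnt G k ≤ ({s : Finset V | G.IsNClique k s ∧ v ∉ s} ∪
        {s : Finset V | G.IsNClique k s ∧ v ∈ s}).ncard :=
        Set.ncard_le_ncard hsub (Set.toFinite _)
    _ ≤ {s : Finset V | G.IsNClique k s ∧ v ∉ s}.ncard +
        {s : Finset V | G.IsNClique k s ∧ v ∈ s}.ncard := Set.ncard_union_le _ _
    _ ≤ _ := by
      gcongr
      · -- cliques avoiding v inject into cliques of induce {x | x ≠ v}
        apply Set.ncard_le_ncard_of_injOn
          (fun s => s.subtype (fun x => x ≠ v)) ?_ ?_ (Set.toFinite _)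
        · rintro s ⟨hs, hv⟩
          have hmap : (s.subtype (fun x => x ≠ v)).map (Function.Embedding.subtype _) = s := by
            rw [Finset.subtype_map]
            exact Finset.filter_eq_self.mpr (fun x hx hxv => hv (hxv ▸ hx))
          constructor
          · intro a ha b hb hab
            simp only [Finset.mem_coe, Finset.mem_subtype] at ha hb
            exact hs.isClique ha hb (fun h => hab (Subtype.ext h))
          · have := congrArg Finset.card hmap
            rwa [Finset.card_map, hs.card_eq] at this
        · rintro s ⟨hs, hv⟩ t ⟨ht, hv'⟩ h
          have h1 : (s.subtype (fun x => x ≠ v)).map (Function.Embedding.subtype _) = s := by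
            rw [Finset.subtype_map]
            exact Finset.filter_eq_self.mpr (fun x hx hxv => hv (hxv ▸ hx))
          have h2 : (t.subtype (fun x => x ≠ v)).map (Function.Embedding.subtype _) = t := by
            rw [Finset.subtype_map]
            exact Finset.filter_eq_self.mpr (fun x hx hxv => hv' (hxv ▸ hx))
          rw [← h1, ← h2]
          exact congrArg _ h
      · -- cliques containing v inject into (k-1)-cliques of the neighborhood
        apply Set.ncard_le_ncard_of_injOn
          (fun s => (s.erase v).subtype (· ∈ G.neighborSet v)) ?_ ?_ (Set.toFinite _)
        · rintro s ⟨hs, hv⟩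
          have hadj : ∀ x ∈ s.erase v, x ∈ G.neighborSet v := by
            intro x hx
            obtain ⟨hxv, hxs⟩ := Finset.mem_erase.mp hx
            exact (hs.isClique hv hxs (Ne.symm hxv))
          have hmap : ((s.erase v).subtype (· ∈ G.neighborSet v)).map
              (Function.Embedding.subtype _) = s.erase v := by
            rw [Finset.subtype_map]
            exact Finset.filter_eq_self.mpr hadj
          constructor
          · intro a ha b hb hab
            simp only [Finset.mem_coe, Finset.mem_subtype] at ha hb
            exact hs.isClique (Finset.mem_of_mem_erase ha) (Finset.mem_of_mem_erase hb)
              (fun h => hab (Subtype.ext h))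
          · have := congrArg Finset.card hmap
            rw [Finset.card_map] at this
            rw [this, Finset.card_erase_of_mem hv, hs.card_eq]
        · rintro s ⟨hs, hv⟩ t ⟨ht, hv'⟩ h
          have hadjs : ∀ x ∈ s.erase v, x ∈ G.neighborSet v := fun x hx =>
            hs.isClique hv (Finset.mem_of_mem_erase hx) (Ne.symm (Finset.mem_erase.mp hx).1)
          have hadjt : ∀ x ∈ t.erase v, x ∈ G.neighborSet v := fun x hx =>
            ht.isClique hv' (Finset.mem_of_mem_erase hx) (Ne.symm (Finset.mem_erase.mp hx).1)
          have h1 : ((s.erase v).subtype (· ∈ G.neighborSet v)).map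
              (Function.Embedding.subtype _) = s.erase v := by
            rw [Finset.subtype_map]; exact Finset.filter_eq_self.mpr hadjs
          have h2 : ((t.erase v).subtype (· ∈ G.neighborSet v)).map
              (Function.Embedding.subtype _) = t.erase v := by
            rw [Finset.subtype_map]; exact Finset.filter_eq_self.mpr hadjt
          dsimp only at h
          have : s.erase v = t.erase v := by rw [← h1, ← h2, h]
          rw [← Finset.insert_erase hv, ← Finset.insert_erase hv', this]


private lemma exists_low_degree {V : Type*} [Fintype V] [DecidableEq V]
    (G : SimpleGraph V) [DecidableRel G.Adj] (n r : ℕ) (hcard : Fintype.card V = n)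
    (hr : 1 ≤ r) (hrn : r < n) (hF : G.CliqueFree (r + 1)) :
    ∃ v : V, G.degree v + ((n - 1) / r + 1) ≤ n := by
  set D : ℕ := (n - 1) / r + 1 with hD
  by_contra hcon
  push_neg at hcon
  have hrD : r * (D - 1) ≤ n - 1 := by
    simp only [hD, Nat.add_sub_cancel]
    exact Nat.mul_div_le (n - 1) r
  have claim : ∀ j, j ≤ r + 1 → ∃ s : Finset V, G.IsNClique j s ∧
      n ≤ (univ.filter fun w => ∀ x ∈ s, G.Adj x w).card + j * (D - 1) := by
    intro j
    induction j with
    | zero =>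
      intro _
      refine ⟨∅, ⟨by simp [SimpleGraph.isClique_iff], rfl⟩, ?_⟩
      simp [Finset.filter_true_of_mem, hcard]
    | succ j ih =>
      intro hj
      obtain ⟨s, hs, hc⟩ := ih (Nat.le_of_succ_le hj)
      set C := univ.filter fun w => ∀ x ∈ s, G.Adj x w with hCdef
      have hjr : j ≤ r := Nat.lt_succ_iff.mp hj
      have hCpos : 0 < C.card := by
        have : j * (D - 1) ≤ r * (D - 1) := Nat.mul_le_mul_right _ hjr
        omega
      obtain ⟨w, hw⟩ := Finset.card_pos.mp hCpos
      have hwadj : ∀ x ∈ s, G.Adj x w := (Finset.mem_filter.mp hw).2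
      have hwns : w ∉ s := fun hws => (G.loopless.irrefl w) (hwadj w hws)
      refine ⟨insert w s, hs.insert (fun b hb => (hwadj b hb).symm), ?_⟩
      set C' := univ.filter fun u => ∀ x ∈ insert w s, G.Adj x u with hC'def
      have hsubset : C ∩ G.neighborFinset w ⊆ C' := by
        intro u hu
        obtain ⟨huC, huN⟩ := Finset.mem_inter.mp hu
        simp only [hC'def, Finset.mem_filter, Finset.mem_univ, true_and]
        intro x hx
        rcases Finset.mem_insert.mp hx with rfl | hx
        · exact (G.mem_neighborFinset _ _).mp huN
        · exact (Finset.mem_filter.mp huC).2 x hx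
      have hIE : (C ∩ G.neighborFinset w).card + (C ∪ G.neighborFinset w).card
          = C.card + (G.neighborFinset w).card := Finset.card_inter_add_card_union _ _
      have hUn : (C ∪ G.neighborFinset w).card ≤ n := hcard ▸ Finset.card_le_univ _
      have hdeg : n + 1 ≤ G.degree w + D := hcon w
      have hNcard : (G.neighborFinset w).card = G.degree w := G.card_neighborFinset_eq_degree w
      have hsub2 : (C ∩ G.neighborFinset w).card ≤ C'.card := Finset.card_le_card hsubset
      have hmul : (j + 1) * (D - 1) = j * (D - 1) + (D - 1) := by ring
      omega
  obtain ⟨s, hs, -⟩ := claim (r + 1) le_rfl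
  exact hF s hs


private lemma turan_step (n m k : ℕ) (hm : 1 ≤ m) (hrn : m + 1 < n) :
    cnt (turanGraph (n - 1) (m + 1)) (k + 1) +
      cnt (turanGraph (n - ((n - 1) / (m + 1) + 1)) m) k
      ≤ cnt (turanGraph n (m + 1)) (k + 1) := by
  set r := m + 1 with hrdef
  set t := (n - 1) % r with htdef
  set D := (n - 1) / r + 1 with hDdef
  set n' := n - D with hn'def
  have hn1 : 1 ≤ n := by omega
  have htr : t < r := Nat.mod_lt _ (by omega)
  set last : Fin n := ⟨n - 1, by omega⟩ with hlastdef
  set A := {s : Finset (Fin n) | (turanGraph n r).IsNClique (k + 1) s ∧ last ∉ s} with hA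
  set B := {s : Finset (Fin n) | (turanGraph n r).IsNClique (k + 1) s ∧ last ∈ s} with hB
  -- the skip function
  set sig : ℕ → ℕ := fun i => if i < t then i else i + 1 with hsig
  have hsig_lt : ∀ i, i < m → sig i < r := by
    intro i hi; simp only [hsig]; split <;> omega
  have hsig_ne : ∀ i, i < m → sig i ≠ t := by
    intro i hi; simp only [hsig]; split <;> omega
  have hsig_inj : ∀ i j, sig i = sig j → i = j := by
    intro i j; simp only [hsig]; split_ifs <;> omega
  have hsig_le : ∀ i, sig i ≤ i + 1 := by
    intro i; simp only [hsig]; split <;> omega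
  set fnat : ℕ → ℕ := fun a => r * (a / m) + sig (a % m) with hfnat
  have hmod : ∀ a, fnat a % r = sig (a % m) := by
    intro a
    simp only [hfnat]
    rw [Nat.mul_add_mod, Nat.mod_eq_of_lt (hsig_lt _ (Nat.mod_lt _ (by omega)))]
  have hdiv : ∀ a, fnat a / r = a / m := by
    intro a
    simp only [hfnat]
    rw [Nat.mul_add_div (by omega), Nat.div_eq_of_lt (hsig_lt _ (Nat.mod_lt _ (by omega))),
      Nat.add_zero]
  have hrD : n ≤ r * D := by
    have h1 : r * ((n - 1) / r) + (n - 1) % r = n - 1 := Nat.div_add_mod _ _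
    have h2 : (n - 1) % r < r := Nat.mod_lt _ (by omega)
    have h3 : r * D = r * ((n - 1) / r) + r := by rw [hDdef]; ring
    omega
  have hfnat_lt : ∀ a, a < n' → fnat a < n := by
    intro a ha
    have hb : a / m < D := by
      by_contra hcon
      push_neg at hcon
      have h1 : m * D ≤ m * (a / m) := Nat.mul_le_mul_left _ hcon
      have h2 : m * (a / m) ≤ a := Nat.mul_div_le a m
      have h3 : r * D = m * D + D := by rw [hrdef]; ring
      omega
    have e1 : m * (a / m) + a % m = a := Nat.div_add_mod a m
    have e2 : fnat a = r * (a / m) + sig (a % m) := rfl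
    have e3 : r * (a / m) = m * (a / m) + a / m := by rw [hrdef]; ring
    have e4 := hsig_le (a % m)
    omega
  have hfnat_inj : ∀ a b, fnat a = fnat b → a = b := by
    intro a b h
    have h1 : a / m = b / m := by rw [← hdiv a, ← hdiv b, h]
    have h2 : sig (a % m) = sig (b % m) := by rw [← hmod a, ← hmod b, h]
    have h3 := hsig_inj _ _ h2
    have e1 : m * (a / m) + a % m = a := Nat.div_add_mod a m
    have e2 : m * (b / m) + b % m = b := Nat.div_add_mod b m
    calc a = m * (a / m) + a % m := e1.symm
      _ = m * (b / m) + b % m := by rw [h1, h3]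
      _ = b := e2
  set femb : Fin n' ↪ Fin n :=
    ⟨fun a => ⟨fnat a, hfnat_lt a a.isLt⟩,
     fun a b h => Fin.ext (hfnat_inj _ _ (congrArg Fin.val h))⟩ with hfemb
  have hfval : ∀ a : Fin n', ((femb a : Fin n) : ℕ) = fnat a := fun a => rfl
  -- first injection
  have hstep1 : cnt (turanGraph (n - 1) r) (k + 1) ≤ A.ncard := by
    apply Set.ncard_le_ncard_of_injOn
      (fun s => s.map (Fin.castLEEmb (show n - 1 ≤ n by omega)))
      ?_ ?_ (Set.toFinite _)
    · rintro s hs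
      refine ⟨⟨?_, by simp [hs.card_eq]⟩, ?_⟩
      · intro x hx y hy hxy
        simp only [Finset.coe_map, Set.mem_image, Finset.mem_coe] at hx hy
        obtain ⟨a, ha, rfl⟩ := hx
        obtain ⟨b, hb, rfl⟩ := hy
        have hab : a ≠ b := fun h => hxy (by rw [h])
        have h2 : (a : ℕ) % r ≠ (b : ℕ) % r := hs.isClique ha hb hab
        show ((Fin.castLEEmb (show n - 1 ≤ n by omega) a : Fin n) : ℕ) % r ≠
          ((Fin.castLEEmb (show n - 1 ≤ n by omega) b : Fin n) : ℕ) % r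
        simpa using h2
      · intro hmem
        simp only [Finset.mem_map] at hmem
        obtain ⟨a, _, hae⟩ := hmem
        have : (a : ℕ) = n - 1 := congrArg Fin.val hae
        omega
    · exact fun s _ u _ h => Finset.map_injective _ h
  -- second injection
  have hstep2 : cnt (turanGraph n' m) k ≤ B.ncard := by
    apply Set.ncard_le_ncard_of_injOn
      (fun s => insert last (s.map femb)) ?_ ?_ (Set.toFinite _)
    · rintro s hs
      have hnotmem : last ∉ s.map femb := by
        intro hmem
        simp only [Finset.mem_map] at hmem
        obtain ⟨a, _, hae⟩ := hmem
        have hv : fnat a = n - 1 := congrArg Fin.val hae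
        have : fnat a % r = t := by rw [hv]
        rw [hmod] at this
        exact hsig_ne _ (Nat.mod_lt _ (by omega)) this
      refine ⟨⟨?_, ?_⟩, Finset.mem_insert_self _ _⟩
      · intro x hx y hy hxy
        simp only [Finset.coe_insert, Set.mem_insert_iff, Finset.coe_map, Set.mem_image,
          Finset.mem_coe] at hx hy
        have hlastadj : ∀ a : Fin n', (turanGraph n r).Adj last (femb a) := by
          intro a
          show ((last : Fin n) : ℕ) % r ≠ ((femb a : Fin n) : ℕ) % r
          have hlastmod : ((last : Fin n) : ℕ) % r = t := rfl
          rw [hfval, hmod, hlastmod]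
          exact fun h => hsig_ne _ (Nat.mod_lt _ (by omega)) h.symm
        rcases hx with rfl | ⟨a, ha, rfl⟩
        · rcases hy with rfl | ⟨b, hb, rfl⟩
          · exact absurd rfl hxy
          · exact hlastadj b
        · rcases hy with rfl | ⟨b, hb, rfl⟩
          · exact (hlastadj a).symm
          · have hab : a ≠ b := fun h => hxy (by rw [h])
            have hadj := hs.isClique ha hb hab
            have hmm : (a : ℕ) % m ≠ (b : ℕ) % m := hadj
            show ((femb a : Fin n) : ℕ) % r ≠ ((femb b : Fin n) : ℕ) % r
            rw [hfval, hfval, hmod, hmod]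
            exact fun h => hmm (hsig_inj _ _ h)
      · rw [Finset.card_insert_of_notMem hnotmem, Finset.card_map, hs.card_eq]
    · rintro s hsmem u humem h
      dsimp only at h
      have hnots : last ∉ s.map femb := by
        intro hmem
        simp only [Finset.mem_map] at hmem
        obtain ⟨a, _, hae⟩ := hmem
        have hv : fnat a = n - 1 := congrArg Fin.val hae
        have : fnat a % r = t := by rw [hv]
        rw [hmod] at this
        exact hsig_ne _ (Nat.mod_lt _ (by omega)) this
      have hnotu : last ∉ u.map femb := by
        intro hmem
        simp only [Finset.mem_map] at hmem
        obtain ⟨a, _, hae⟩ := hmem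
        have hv : fnat a = n - 1 := congrArg Fin.val hae
        have : fnat a % r = t := by rw [hv]
        rw [hmod] at this
        exact hsig_ne _ (Nat.mod_lt _ (by omega)) this
      have : s.map femb = u.map femb := by
        rw [← Finset.erase_insert hnots, ← Finset.erase_insert hnotu, h]
      exact Finset.map_injective _ this
  -- combine
  have hdisj : Disjoint A B := by
    rw [Set.disjoint_left]
    rintro s ⟨_, hs⟩ ⟨_, hs'⟩
    exact hs hs'
  have hsub : A ∪ B ⊆ {s : Finset (Fin n) | (turanGraph n r).IsNClique (k + 1) s} := by
    rintro s (⟨h, -⟩ | ⟨h, -⟩) <;> exact h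
  calc cnt (turanGraph (n - 1) r) (k + 1) + cnt (turanGraph n' m) k
      ≤ A.ncard + B.ncard := Nat.add_le_add hstep1 hstep2
    _ = (A ∪ B).ncard := (Set.ncard_union_eq hdisj (Set.toFinite _) (Set.toFinite _)).symm
    _ ≤ cnt (turanGraph n r) (k + 1) := Set.ncard_le_ncard hsub (Set.toFinite _)


private lemma nbhd_cliqueFree {V : Type*} (G : SimpleGraph V) (v : V) (r : ℕ)
    (hF : G.CliqueFree (r + 1)) : (G.induce (G.neighborSet v)).CliqueFree r := by
  classical
  intro s hs
  have hvnot : v ∉ s.map (Function.Embedding.subtype _) := by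
    intro h
    simp only [Finset.mem_map, Function.Embedding.coe_subtype] at h
    obtain ⟨⟨a, ha⟩, -, heq⟩ := h
    exact G.loopless.irrefl v (show G.Adj v v from heq ▸ ha)
  apply hF (insert v (s.map (Function.Embedding.subtype _)))
  constructor
  · intro x hx y hy hxy
    simp only [Finset.coe_insert, Set.mem_insert_iff, Finset.coe_map,
      Function.Embedding.coe_subtype, Set.mem_image, Finset.mem_coe] at hx hy
    rcases hx with rfl | ⟨a, ha, rfl⟩
    · rcases hy with rfl | ⟨b, hb, rfl⟩
      · exact absurd rfl hxy
      · exact b.2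
    · rcases hy with rfl | ⟨b, hb, rfl⟩
      · exact (a.2 : G.Adj y ↑a).symm
      · exact hs.isClique ha hb (fun h => hxy (by rw [h]))
  · rw [Finset.card_insert_of_notMem hvnot, Finset.card_map, hs.card_eq]


private lemma zykov_main : ∀ n : ℕ, ∀ (V : Type) [Fintype V] [DecidableEq V],
    Fintype.card V = n → ∀ (r k : ℕ) (G : SimpleGraph V), 1 ≤ k → k ≤ r →
    G.CliqueFree (r + 1) → cnt G k ≤ cnt (turanGraph n r) k := by
  intro n
  induction n using Nat.strong_induction_on with
  | _ n IH =>
    intro V _ _ hcard r k G hk hkr hF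
    classical
    have hfinV : Finite V := Finite.of_fintype V
    rcases eq_or_lt_of_le hk with hk1 | hk2
    · -- k = 1 : both counts are n
      rw [← hk1, cnt_one, cnt_one, Nat.card_eq_fintype_card, Nat.card_eq_fintype_card,
        hcard, Fintype.card_fin]
    · -- 2 ≤ k (hence 2 ≤ r)
      by_cases hnr : n ≤ r
      · -- turanGraph n r is complete; use the equivalence V ≃ Fin n
        have e := Fintype.equivFinOfCardEq hcard
        apply cnt_le_of_hom G _ e.toEmbedding
        intro a b hab
        show ((e a : Fin n) : ℕ) % r ≠ ((e b : Fin n) : ℕ) % r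
        have hne : e a ≠ e b := fun h => hab.ne (e.injective h)
        rw [Nat.mod_eq_of_lt (lt_of_lt_of_le (e a).isLt hnr),
          Nat.mod_eq_of_lt (lt_of_lt_of_le (e b).isLt hnr)]
        exact fun h => hne (Fin.ext h)
      · push_neg at hnr
        have hr2 : 2 ≤ r := le_trans hk2 hkr
        set D := (n - 1) / r + 1 with hD
        obtain ⟨v, hv⟩ := exists_low_degree G n r hcard (by omega) hnr hF
        have hD1 : 1 ≤ D := Nat.le_add_left 1 _
        -- split off vertex v
        have h1 := cnt_split G v k hk
        -- deleted graph
        have hc1 : Fintype.card ↥({x : V | x ≠ v}) = n - 1 := by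
          have : Fintype.card ↥({x : V | x ≠ v}) = Fintype.card {x : V // x ≠ v} :=
            Fintype.card_congr (Equiv.refl _)
          rw [this, Fintype.card_subtype_compl, hcard, Fintype.card_subtype_eq]
        have hcf1 : (G.induce {x : V | x ≠ v}).CliqueFree (r + 1) :=
          hF.comap (Embedding.induce _).isContained
        have h2 : cnt (G.induce {x : V | x ≠ v}) k ≤ cnt (turanGraph (n - 1) r) k :=
          IH (n - 1) (by omega) _ hc1 r k _ hk hkr hcf1
        -- neighbourhood graph
        have hdn : Fintype.card ↥(G.neighborSet v) = G.degree v :=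
          G.card_neighborSet_eq_degree v
        have hcf2 : (G.induce (G.neighborSet v)).CliqueFree (r - 1 + 1) := by
          have : r - 1 + 1 = r := by omega
          rw [this]
          exact nbhd_cliqueFree G v r hF
        have h3 : cnt (G.induce (G.neighborSet v)) (k - 1) ≤
            cnt (turanGraph (G.degree v) (r - 1)) (k - 1) :=
          IH (G.degree v)
            (Nat.lt_of_succ_le (le_trans
              (Nat.add_le_add_left (Nat.le_add_left 1 ((n - 1) / r)) _) hv))
            _ hdn (r - 1) (k - 1) _ (by omega) (by omega) hcf2
        have h4 : cnt (turanGraph (G.degree v) (r - 1)) (k - 1) ≤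
            cnt (turanGraph (n - D) (r - 1)) (k - 1) := by
          apply cnt_le_of_hom _ _ (Fin.castLEEmb (show G.degree v ≤ n - D by omega))
          intro a b hab
          have hadj : (a : ℕ) % (r - 1) ≠ (b : ℕ) % (r - 1) := hab
          show ((Fin.castLEEmb _ a : Fin (n - D)) : ℕ) % (r - 1) ≠
            ((Fin.castLEEmb _ b : Fin (n - D)) : ℕ) % (r - 1)
          simpa using hadj
        have h5 := turan_step n (r - 1) (k - 1) (by omega) (by omega)
        have er : r - 1 + 1 = r := by omega
        have ek : k - 1 + 1 = k := by omega
        rw [er, ek, ← hD] at h5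
        omega

theorem stmt_14 (n r k : ℕ) (h1 : 1 ≤ k) (h2 : k ≤ r) (h3 : r ≤ n)
    (G : SimpleGraph (Fin n)) (hF : G.CliqueFree (r + 1)) :
    {s : Finset (Fin n) | G.IsNClique k s}.ncard ≤
      {s : Finset (Fin n) | (SimpleGraph.turanGraph n r).IsNClique k s}.ncard :=
  zykov_main n (Fin n) (Fintype.card_fin n) r k G h1 h2 hF
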